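/- Let 0 < x₁ < x₂ < 1 and let F : [0,1]² → ℝ be continuous such that the mixed second partial derivative ∂²F/∂x∂y exists and is strictly positive at every point of (0,x₁)×(0,1), strictly negative at every point of (x₁,x₂)×(0,1), and strictly positive at every point of (x₂,1)×(0,1). Let μ* be a doubly stochastic measure on [0,1]² maximizing ∫ F dμ over all doubly stochastic measures, and let C(x,y) = μ*([0,x]×[0,y]), h₁(y) = C(x₁,y), h₂(y) = C(x₂,y). Then for all (x,y) ∈ [0,1]²: C(x,y) = min(x, h₁(y)) if x ∈ [0,x₁]; C(x,y) = max(x + h₂(y) − x₂, h₁(y)) if x ∈ [x₁,x₂]; and C(x,y) = min(x − x₂ + h₂(y), y) if x ∈ [x₂,1]. -/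

import Mathlib

open MeasureTheory Set

/-- A doubly stochastic measure on `[0,1]²`: a Borel probability measure whose
marginals on both coordinates are Lebesgue measure on `[0,1]`. -/
def IsDoublyStochastic (μ : Measure (ℝ × ℝ)) : Prop :=
  IsProbabilityMeasure μ ∧
  (∀ B : Set ℝ, MeasurableSet B → B ⊆ Icc 0 1 → μ (B ×ˢ Icc (0:ℝ) 1) = volume B) ∧
  (∀ B : Set ℝ, MeasurableSet B → B ⊆ Icc 0 1 → μ (Icc (0:ℝ) 1 ×ˢ B) = volume B)

/-- The copula (distribution function) of a measure on `[0,1]²`. -/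
noncomputable def copulaOf (μ : Measure (ℝ × ℝ)) (x y : ℝ) : ℝ :=
  (μ (Icc 0 x ×ˢ Icc 0 y)).toReal

section DSAux

variable {μ : Measure (ℝ × ℝ)}

lemma ds_sq (h : IsDoublyStochastic μ) : μ (Icc (0:ℝ) 1 ×ˢ Icc (0:ℝ) 1) = 1 := by
  rw [h.2.1 _ measurableSet_Icc subset_rfl, Real.volume_Icc]; norm_num

lemma ds_compl_sq (h : IsDoublyStochastic μ) : μ ((Icc (0:ℝ) 1 ×ˢ Icc (0:ℝ) 1)ᶜ) = 0 := by
  have : IsProbabilityMeasure μ := h.1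
  rw [measure_compl (measurableSet_Icc.prod measurableSet_Icc) (measure_ne_top μ _), ds_sq h,
    measure_univ, tsub_self]

lemma ds_vline (h : IsDoublyStochastic μ) (c : ℝ) : μ ({c} ×ˢ (univ : Set ℝ)) = 0 := by
  by_cases hc : c ∈ Icc (0:ℝ) 1
  · have hsub : {c} ×ˢ (univ : Set ℝ) ⊆ ({c} ×ˢ Icc (0:ℝ) 1) ∪ (Icc (0:ℝ) 1 ×ˢ Icc (0:ℝ) 1)ᶜ := by
      rintro ⟨a, b⟩ ⟨ha, -⟩
      by_cases hb : b ∈ Icc (0:ℝ) 1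
      · exact Or.inl ⟨ha, hb⟩
      · exact Or.inr fun hm => hb hm.2
    refine measure_mono_null hsub (measure_union_null ?_ (ds_compl_sq h))
    rw [h.2.1 {c} (measurableSet_singleton c) (by simpa using hc)]
    simp
  · refine measure_mono_null ?_ (ds_compl_sq h)
    rintro ⟨a, b⟩ ⟨ha, -⟩ hm
    rw [mem_singleton_iff] at ha
    subst ha
    exact hc hm.1

lemma ds_hline (h : IsDoublyStochastic μ) (c : ℝ) : μ ((univ : Set ℝ) ×ˢ {c}) = 0 := by
  by_cases hc : c ∈ Icc (0:ℝ) 1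
  · have hsub : (univ : Set ℝ) ×ˢ {c} ⊆ (Icc (0:ℝ) 1 ×ˢ {c}) ∪ (Icc (0:ℝ) 1 ×ˢ Icc (0:ℝ) 1)ᶜ := by
      rintro ⟨a, b⟩ ⟨-, hb⟩
      by_cases ha : a ∈ Icc (0:ℝ) 1
      · exact Or.inl ⟨ha, hb⟩
      · exact Or.inr fun hm => ha hm.1
    refine measure_mono_null hsub (measure_union_null ?_ (ds_compl_sq h))
    rw [h.2.2 {c} (measurableSet_singleton c) (by simpa using hc)]
    simp
  · refine measure_mono_null ?_ (ds_compl_sq h)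
    rintro ⟨a, b⟩ ⟨-, hb⟩ hm
    rw [mem_singleton_iff] at hb
    subst hb
    exact hc hm.2

lemma ds_rect_x (h : IsDoublyStochastic μ) {x : ℝ} (hx : x ∈ Icc (0:ℝ) 1) :
    μ (Icc 0 x ×ˢ Icc (0:ℝ) 1) = ENNReal.ofReal x := by
  rw [h.2.1 _ measurableSet_Icc (Icc_subset_Icc le_rfl hx.2), Real.volume_Icc, sub_zero]

lemma ds_rect_y (h : IsDoublyStochastic μ) {y : ℝ} (hy : y ∈ Icc (0:ℝ) 1) :
    μ (Icc (0:ℝ) 1 ×ˢ Icc 0 y) = ENNReal.ofReal y := by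
  rw [h.2.2 _ measurableSet_Icc (Icc_subset_Icc le_rfl hy.2), Real.volume_Icc, sub_zero]

end DSAux

section CopAux

variable {μ : Measure (ℝ × ℝ)}

lemma cop_nonneg (μ : Measure (ℝ × ℝ)) (x y : ℝ) : 0 ≤ copulaOf μ x y :=
  ENNReal.toReal_nonneg

lemma cop_ne_top (h : IsDoublyStochastic μ) (S : Set (ℝ × ℝ)) : μ S ≠ ⊤ := by
  have : IsProbabilityMeasure μ := h.1
  exact measure_ne_top μ S

lemma cop_mono_x (h : IsDoublyStochastic μ) {x x' : ℝ} (hxx : x ≤ x') (y : ℝ) :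
    copulaOf μ x y ≤ copulaOf μ x' y := by
  refine ENNReal.toReal_mono (cop_ne_top h _) (measure_mono ?_)
  exact prod_mono (Icc_subset_Icc le_rfl hxx) subset_rfl

lemma cop_mono_y (h : IsDoublyStochastic μ) (x : ℝ) {y y' : ℝ} (hyy : y ≤ y') :
    copulaOf μ x y ≤ copulaOf μ x y' := by
  refine ENNReal.toReal_mono (cop_ne_top h _) (measure_mono ?_)
  exact prod_mono subset_rfl (Icc_subset_Icc le_rfl hyy)

lemma cop_le_x (h : IsDoublyStochastic μ) {x y : ℝ} (hx : x ∈ Icc (0:ℝ) 1) (hy : y ≤ 1) :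
    copulaOf μ x y ≤ x := by
  have h1 : μ (Icc 0 x ×ˢ Icc 0 y) ≤ ENNReal.ofReal x := by
    rw [← ds_rect_x h hx]
    exact measure_mono (prod_mono subset_rfl (Icc_subset_Icc le_rfl hy))
  calc copulaOf μ x y ≤ (ENNReal.ofReal x).toReal :=
        ENNReal.toReal_mono ENNReal.ofReal_ne_top h1
    _ = x := ENNReal.toReal_ofReal hx.1

lemma cop_le_y (h : IsDoublyStochastic μ) {x y : ℝ} (hy : y ∈ Icc (0:ℝ) 1) (hx : x ≤ 1) :
    copulaOf μ x y ≤ y := by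
  have h1 : μ (Icc 0 x ×ˢ Icc 0 y) ≤ ENNReal.ofReal y := by
    rw [← ds_rect_y h hy]
    exact measure_mono (prod_mono (Icc_subset_Icc le_rfl hx) subset_rfl)
  calc copulaOf μ x y ≤ (ENNReal.ofReal y).toReal :=
        ENNReal.toReal_mono ENNReal.ofReal_ne_top h1
    _ = y := ENNReal.toReal_ofReal hy.1

lemma cop_x_one (h : IsDoublyStochastic μ) {x : ℝ} (hx : x ∈ Icc (0:ℝ) 1) :
    copulaOf μ x 1 = x := by
  rw [copulaOf, ds_rect_x h hx, ENNReal.toReal_ofReal hx.1]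

lemma cop_one_y (h : IsDoublyStochastic μ) {y : ℝ} (hy : y ∈ Icc (0:ℝ) 1) :
    copulaOf μ 1 y = y := by
  rw [copulaOf, ds_rect_y h hy, ENNReal.toReal_ofReal hy.1]

lemma cop_zero_y (h : IsDoublyStochastic μ) (x : ℝ) : copulaOf μ x 0 = 0 := by
  have : μ (Icc 0 x ×ˢ Icc (0:ℝ) 0) = 0 := by
    refine measure_mono_null ?_ (ds_hline h 0)
    rintro ⟨a, b⟩ ⟨-, hb⟩
    simp only [Icc_self, mem_singleton_iff] at hb
    exact ⟨trivial, hb⟩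
  rw [copulaOf, this, ENNReal.toReal_zero]

lemma cop_zero_x (h : IsDoublyStochastic μ) (y : ℝ) : copulaOf μ 0 y = 0 := by
  have : μ (Icc (0:ℝ) 0 ×ˢ Icc 0 y) = 0 := by
    refine measure_mono_null ?_ (ds_vline h 0)
    rintro ⟨a, b⟩ ⟨ha, -⟩
    simp only [Icc_self, mem_singleton_iff] at ha
    exact ⟨ha, trivial⟩
  rw [copulaOf, this, ENNReal.toReal_zero]

/-- The vertical strip mass: `μ (Ioc x x' ×ˢ Icc 0 y)` relates copula values. -/
lemma cop_split (h : IsDoublyStochastic μ) {x x' : ℝ} (hx : 0 ≤ x) (hxx : x ≤ x') (y : ℝ) :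
    μ (Icc 0 x' ×ˢ Icc 0 y) = μ (Icc 0 x ×ˢ Icc 0 y) + μ (Ioc x x' ×ˢ Icc 0 y) := by
  have hset : Icc 0 x' ×ˢ Icc 0 y = (Icc 0 x ×ˢ Icc 0 y) ∪ (Ioc x x' ×ˢ Icc 0 y) := by
    rw [← union_prod, Icc_union_Ioc_eq_Icc hx hxx]
  rw [hset]
  refine measure_union ?_ (measurableSet_Ioc.prod measurableSet_Icc)
  rw [Set.disjoint_left]
  rintro ⟨a, b⟩ ⟨ha, -⟩ ⟨ha', -⟩
  exact absurd ha.2 (not_le.mpr ha'.1)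

lemma cop_strip_le (h : IsDoublyStochastic μ) {x x' y : ℝ} (hx : 0 ≤ x) (hxx : x ≤ x')
    (hx1 : x' ≤ 1) (hy : y ≤ 1) :
    μ (Ioc x x' ×ˢ Icc 0 y) ≤ ENNReal.ofReal (x' - x) := by
  have h1 : μ (Ioc x x' ×ˢ Icc 0 y) ≤ μ (Ioc x x' ×ˢ Icc (0:ℝ) 1) :=
    measure_mono (prod_mono subset_rfl (Icc_subset_Icc le_rfl hy))
  have h2 : μ (Ioc x x' ×ˢ Icc (0:ℝ) 1) = ENNReal.ofReal (x' - x) := by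
    rw [h.2.1 _ measurableSet_Ioc (fun t ht => ⟨le_trans hx (le_of_lt ht.1), le_trans ht.2 hx1⟩),
      Real.volume_Ioc]
  rw [← h2]; exact h1

lemma cop_lip (h : IsDoublyStochastic μ) {x x' y : ℝ} (hx : 0 ≤ x) (hxx : x ≤ x')
    (hx1 : x' ≤ 1) (hy : y ≤ 1) :
    copulaOf μ x' y - copulaOf μ x y ≤ x' - x := by
  have hs := cop_split h hx hxx (μ := μ) y
  have hle := cop_strip_le h hx hxx hx1 hy
  have := ENNReal.toReal_mono ENNReal.ofReal_ne_top hle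
  rw [ENNReal.toReal_ofReal (by linarith)] at this
  have hadd : copulaOf μ x' y = copulaOf μ x y + (μ (Ioc x x' ×ˢ Icc 0 y)).toReal := by
    rw [copulaOf, copulaOf, hs, ENNReal.toReal_add (cop_ne_top h _) (cop_ne_top h _)]
  linarith

end CopAux

section Modular

/-- Strict supermodularity from positive mixed partial on a strip. -/
lemma strict_supermod (F : ℝ × ℝ → ℝ) {a b : ℝ}
    (hd : ∀ x y, x ∈ Ioo a b → y ∈ Ioo (0:ℝ) 1 →
      DifferentiableAt ℝ (fun x' => F (x', y)) x ∧
      DifferentiableAt ℝ (fun y' => deriv (fun x' => F (x', y')) x) y ∧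
      0 < deriv (fun y' => deriv (fun x' => F (x', y')) x) y)
    {s u t v : ℝ} (hs : s ∈ Ioo a b) (hu : u ∈ Ioo a b) (hsu : s < u)
    (ht : t ∈ Ioo (0:ℝ) 1) (hv : v ∈ Ioo (0:ℝ) 1) (htv : t < v) :
    F (s, v) + F (u, t) < F (s, t) + F (u, v) := by
  -- Step 1: for each σ ∈ (a,b), the x-partial is strictly increasing in y
  have hFx : ∀ σ ∈ Ioo a b,
      deriv (fun x' => F (x', t)) σ < deriv (fun x' => F (x', v)) σ := by
    intro σ hσ
    have hmono : StrictMonoOn (fun y' => deriv (fun x' => F (x', y')) σ) (Icc t v) := by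
      refine strictMonoOn_of_deriv_pos (convex_Icc t v) ?_ ?_
      · intro y hy
        have hy' : y ∈ Ioo (0:ℝ) 1 := ⟨lt_of_lt_of_le ht.1 hy.1, lt_of_le_of_lt hy.2 hv.2⟩
        exact ((hd σ y hσ hy').2.1.continuousAt).continuousWithinAt
      · intro y hy
        rw [interior_Icc] at hy
        have hy' : y ∈ Ioo (0:ℝ) 1 := ⟨lt_trans ht.1 hy.1, lt_trans hy.2 hv.2⟩
        exact (hd σ y hσ hy').2.2
    exact hmono (left_mem_Icc.mpr htv.le) (right_mem_Icc.mpr htv.le) htv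
  -- Step 2: σ ↦ F(σ,v) - F(σ,t) is strictly increasing on [s,u]
  have hG : StrictMonoOn (fun σ => F (σ, v) - F (σ, t)) (Icc s u) := by
    have hdiff : ∀ σ ∈ Icc s u, HasDerivAt (fun σ' => F (σ', v) - F (σ', t))
        (deriv (fun x' => F (x', v)) σ - deriv (fun x' => F (x', t)) σ) σ := by
      intro σ hσ
      have hσ' : σ ∈ Ioo a b := ⟨lt_of_lt_of_le hs.1 hσ.1, lt_of_le_of_lt hσ.2 hu.2⟩
      exact ((hd σ v hσ' hv).1.hasDerivAt).sub ((hd σ t hσ' ht).1.hasDerivAt)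
    refine strictMonoOn_of_deriv_pos (convex_Icc s u) ?_ ?_
    · intro σ hσ
      exact ((hdiff σ hσ).differentiableAt.continuousAt).continuousWithinAt
    · intro σ hσ
      rw [interior_Icc] at hσ
      have hσ' : σ ∈ Ioo a b := ⟨lt_trans hs.1 hσ.1, lt_trans hσ.2 hu.2⟩
      rw [(hdiff σ (Ioo_subset_Icc_self hσ)).deriv]
      have := hFx σ hσ'
      linarith
  have := hG (left_mem_Icc.mpr hsu.le) (right_mem_Icc.mpr hsu.le) hsu
  simp only at this
  linarith

/-- Strict submodularity from negative mixed partial on a strip. -/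
lemma strict_submod (F : ℝ × ℝ → ℝ) {a b : ℝ}
    (hd : ∀ x y, x ∈ Ioo a b → y ∈ Ioo (0:ℝ) 1 →
      DifferentiableAt ℝ (fun x' => F (x', y)) x ∧
      DifferentiableAt ℝ (fun y' => deriv (fun x' => F (x', y')) x) y ∧
      deriv (fun y' => deriv (fun x' => F (x', y')) x) y < 0)
    {s u t v : ℝ} (hs : s ∈ Ioo a b) (hu : u ∈ Ioo a b) (hsu : s < u)
    (ht : t ∈ Ioo (0:ℝ) 1) (hv : v ∈ Ioo (0:ℝ) 1) (htv : t < v) :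
    F (s, t) + F (u, v) < F (s, v) + F (u, t) := by
  have hFx : ∀ σ ∈ Ioo a b,
      deriv (fun x' => F (x', v)) σ < deriv (fun x' => F (x', t)) σ := by
    intro σ hσ
    have hmono : StrictAntiOn (fun y' => deriv (fun x' => F (x', y')) σ) (Icc t v) := by
      refine strictAntiOn_of_deriv_neg (convex_Icc t v) ?_ ?_
      · intro y hy
        have hy' : y ∈ Ioo (0:ℝ) 1 := ⟨lt_of_lt_of_le ht.1 hy.1, lt_of_le_of_lt hy.2 hv.2⟩
        exact ((hd σ y hσ hy').2.1.continuousAt).continuousWithinAt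
      · intro y hy
        rw [interior_Icc] at hy
        have hy' : y ∈ Ioo (0:ℝ) 1 := ⟨lt_trans ht.1 hy.1, lt_trans hy.2 hv.2⟩
        exact (hd σ y hσ hy').2.2
    exact hmono (left_mem_Icc.mpr htv.le) (right_mem_Icc.mpr htv.le) htv
  have hG : StrictAntiOn (fun σ => F (σ, v) - F (σ, t)) (Icc s u) := by
    have hdiff : ∀ σ ∈ Icc s u, HasDerivAt (fun σ' => F (σ', v) - F (σ', t))
        (deriv (fun x' => F (x', v)) σ - deriv (fun x' => F (x', t)) σ) σ := by
      intro σ hσ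
      have hσ' : σ ∈ Ioo a b := ⟨lt_of_lt_of_le hs.1 hσ.1, lt_of_le_of_lt hσ.2 hu.2⟩
      exact ((hd σ v hσ' hv).1.hasDerivAt).sub ((hd σ t hσ' ht).1.hasDerivAt)
    refine strictAntiOn_of_deriv_neg (convex_Icc s u) ?_ ?_
    · intro σ hσ
      exact ((hdiff σ hσ).differentiableAt.continuousAt).continuousWithinAt
    · intro σ hσ
      rw [interior_Icc] at hσ
      have hσ' : σ ∈ Ioo a b := ⟨lt_trans hs.1 hσ.1, lt_trans hσ.2 hu.2⟩
      rw [(hdiff σ (Ioo_subset_Icc_self hσ)).deriv]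
      have := hFx σ hσ'
      linarith
  have := hG (left_mem_Icc.mpr hsu.le) (right_mem_Icc.mpr hsu.le) hsu
  simp only at this
  linarith

end Modular

open scoped ENNReal
section Swap

lemma integrable_of_sq (F : ℝ × ℝ → ℝ) (hFc : ContinuousOn F (Icc (0:ℝ) 1 ×ˢ Icc (0:ℝ) 1))
    (m : Measure (ℝ × ℝ)) [IsFiniteMeasure m]
    (hm : m ((Icc (0:ℝ) 1 ×ˢ Icc (0:ℝ) 1)ᶜ) = 0) : Integrable F m := by
  have hmeas : MeasurableSet (Icc (0:ℝ) 1 ×ˢ Icc (0:ℝ) 1) :=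
    measurableSet_Icc.prod measurableSet_Icc
  have hae : ∀ᵐ z ∂m, z ∈ Icc (0:ℝ) 1 ×ˢ Icc (0:ℝ) 1 := by
    rw [ae_iff]
    exact hm
  have hrest : m.restrict (Icc (0:ℝ) 1 ×ˢ Icc (0:ℝ) 1) = m :=
    Measure.restrict_eq_self_of_ae_mem hae
  have hsm : AEStronglyMeasurable F m := by
    rw [← hrest]; exact hFc.aestronglyMeasurable hmeas
  obtain ⟨M, hM⟩ := (isCompact_Icc.prod isCompact_Icc).exists_bound_of_continuousOn hFc
  exact (integrable_const M).mono' hsm (hae.mono fun z hz => hM z hz)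

set_option maxHeartbeats 1000000 in
lemma swap_improve (F : ℝ × ℝ → ℝ) (hFc : ContinuousOn F (Icc (0:ℝ) 1 ×ˢ Icc (0:ℝ) 1))
    {μ : Measure (ℝ × ℝ)} (hds : IsDoublyStochastic μ)
    {A B : Set (ℝ × ℝ)} (hAm : MeasurableSet A) (hBm : MeasurableSet B)
    (hAs : A ⊆ Icc (0:ℝ) 1 ×ˢ Icc (0:ℝ) 1) (hBs : B ⊆ Icc (0:ℝ) 1 ×ˢ Icc (0:ℝ) 1)
    (hdisj : Disjoint A B)
    (hgain : ∀ p ∈ A, ∀ q ∈ B, F p + F q < F (p.1, q.2) + F (q.1, p.2))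
    (hA : μ A ≠ 0) (hB : μ B ≠ 0) :
    ∃ ν, IsDoublyStochastic ν ∧ ∫ p, F p ∂μ < ∫ p, F p ∂ν := by
  haveI : IsProbabilityMeasure μ := hds.1
  have hQm : MeasurableSet (Icc (0:ℝ) 1 ×ˢ Icc (0:ℝ) 1) :=
    measurableSet_Icc.prod measurableSet_Icc
  set Q : Set (ℝ × ℝ) := Icc (0:ℝ) 1 ×ˢ Icc (0:ℝ) 1 with hQdef
  set a : ℝ≥0∞ := μ A with hadef
  set b : ℝ≥0∞ := μ B with hbdef
  have hat : a ≠ ⊤ := measure_ne_top μ A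
  have hbt : b ≠ ⊤ := measure_ne_top μ B
  have ha1 : a ≤ 1 := prob_le_one
  have hb1 : b ≤ 1 := prob_le_one
  have habt : a * b ≠ ⊤ := ENNReal.mul_ne_top hat hbt
  have hab0 : a * b ≠ 0 := mul_ne_zero hA hB
  -- the perturbation pieces
  set γ₁ : Measure (ℝ × ℝ) := b • μ.restrict A with hγ₁def
  set γ₂ : Measure (ℝ × ℝ) := a • μ.restrict B with hγ₂def
  set π₁ : Measure ℝ := γ₁.map Prod.fst with hπ₁def
  set τ₁ : Measure ℝ := γ₁.map Prod.snd with hτ₁def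
  set π₂ : Measure ℝ := γ₂.map Prod.fst with hπ₂def
  set τ₂ : Measure ℝ := γ₂.map Prod.snd with hτ₂def
  set P₁ : Measure (ℝ × ℝ) := π₁.prod τ₂ with hP₁def
  set P₂ : Measure (ℝ × ℝ) := π₂.prod τ₁ with hP₂def
  set ρ₁ : Measure (ℝ × ℝ) := (a * b)⁻¹ • P₁ with hρ₁def
  set ρ₂ : Measure (ℝ × ℝ) := (a * b)⁻¹ • P₂ with hρ₂def
  set ν : Measure (ℝ × ℝ) :=
    ((1 - b) • μ.restrict A) + ((1 - a) • μ.restrict B) + μ.restrict ((A ∪ B)ᶜ) + ρ₁ + ρ₂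
    with hνdef
  -- application lemmas
  have hγ₁app : ∀ S : Set (ℝ × ℝ), MeasurableSet S → γ₁ S = b * μ (S ∩ A) := by
    intro S hS
    rw [hγ₁def, Measure.smul_apply, Measure.restrict_apply hS, smul_eq_mul]
  have hγ₂app : ∀ S : Set (ℝ × ℝ), MeasurableSet S → γ₂ S = a * μ (S ∩ B) := by
    intro S hS
    rw [hγ₂def, Measure.smul_apply, Measure.restrict_apply hS, smul_eq_mul]
  have hπ₁app : ∀ S : Set ℝ, MeasurableSet S → π₁ S = b * μ ((Prod.fst ⁻¹' S) ∩ A) := by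
    intro S hS
    rw [hπ₁def, Measure.map_apply measurable_fst hS, hγ₁app _ (measurable_fst hS)]
  have hτ₁app : ∀ S : Set ℝ, MeasurableSet S → τ₁ S = b * μ ((Prod.snd ⁻¹' S) ∩ A) := by
    intro S hS
    rw [hτ₁def, Measure.map_apply measurable_snd hS, hγ₁app _ (measurable_snd hS)]
  have hπ₂app : ∀ S : Set ℝ, MeasurableSet S → π₂ S = a * μ ((Prod.fst ⁻¹' S) ∩ B) := by
    intro S hS
    rw [hπ₂def, Measure.map_apply measurable_fst hS, hγ₂app _ (measurable_fst hS)]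
  have hτ₂app : ∀ S : Set ℝ, MeasurableSet S → τ₂ S = a * μ ((Prod.snd ⁻¹' S) ∩ B) := by
    intro S hS
    rw [hτ₂def, Measure.map_apply measurable_snd hS, hγ₂app _ (measurable_snd hS)]
  -- masses
  have hγ₁univ : γ₁ univ = b * a := by rw [hγ₁app _ MeasurableSet.univ, univ_inter]
  have hγ₂univ : γ₂ univ = a * b := by rw [hγ₂app _ MeasurableSet.univ, univ_inter]
  have hAfst : (Prod.fst ⁻¹' Icc (0:ℝ) 1) ∩ A = A :=
    inter_eq_self_of_subset_right (fun z hz => (hAs hz).1)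
  have hAsnd : (Prod.snd ⁻¹' Icc (0:ℝ) 1) ∩ A = A :=
    inter_eq_self_of_subset_right (fun z hz => (hAs hz).2)
  have hBfst : (Prod.fst ⁻¹' Icc (0:ℝ) 1) ∩ B = B :=
    inter_eq_self_of_subset_right (fun z hz => (hBs hz).1)
  have hBsnd : (Prod.snd ⁻¹' Icc (0:ℝ) 1) ∩ B = B :=
    inter_eq_self_of_subset_right (fun z hz => (hBs hz).2)
  have hπ₁I : π₁ (Icc (0:ℝ) 1) = b * a := by rw [hπ₁app _ measurableSet_Icc, hAfst]
  have hτ₁I : τ₁ (Icc (0:ℝ) 1) = b * a := by rw [hτ₁app _ measurableSet_Icc, hAsnd]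
  have hπ₂I : π₂ (Icc (0:ℝ) 1) = a * b := by rw [hπ₂app _ measurableSet_Icc, hBfst]
  have hτ₂I : τ₂ (Icc (0:ℝ) 1) = a * b := by rw [hτ₂app _ measurableSet_Icc, hBsnd]
  -- finiteness
  haveI : IsFiniteMeasure γ₁ := ⟨by
    rw [hγ₁univ]; exact ENNReal.mul_lt_top hbt.lt_top hat.lt_top⟩
  haveI : IsFiniteMeasure γ₂ := ⟨by
    rw [hγ₂univ]; exact ENNReal.mul_lt_top hat.lt_top hbt.lt_top⟩
  haveI : IsFiniteMeasure π₁ := ⟨by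
    rw [hπ₁def, Measure.map_apply measurable_fst MeasurableSet.univ, preimage_univ, hγ₁univ]
    exact ENNReal.mul_lt_top hbt.lt_top hat.lt_top⟩
  haveI : IsFiniteMeasure τ₁ := ⟨by
    rw [hτ₁def, Measure.map_apply measurable_snd MeasurableSet.univ, preimage_univ, hγ₁univ]
    exact ENNReal.mul_lt_top hbt.lt_top hat.lt_top⟩
  haveI : IsFiniteMeasure π₂ := ⟨by
    rw [hπ₂def, Measure.map_apply measurable_fst MeasurableSet.univ, preimage_univ, hγ₂univ]
    exact ENNReal.mul_lt_top hat.lt_top hbt.lt_top⟩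
  haveI : IsFiniteMeasure τ₂ := ⟨by
    rw [hτ₂def, Measure.map_apply measurable_snd MeasurableSet.univ, preimage_univ, hγ₂univ]
    exact ENNReal.mul_lt_top hat.lt_top hbt.lt_top⟩
  haveI : IsFiniteMeasure P₁ := by rw [hP₁def]; infer_instance
  haveI : IsFiniteMeasure P₂ := by rw [hP₂def]; infer_instance
  haveI : IsFiniteMeasure ρ₁ := ⟨by
    rw [hρ₁def, Measure.smul_apply, smul_eq_mul]
    exact ENNReal.mul_lt_top (ENNReal.inv_lt_top.mpr (pos_iff_ne_zero.mpr hab0)) (measure_lt_top _ _)⟩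
  haveI : IsFiniteMeasure ρ₂ := ⟨by
    rw [hρ₂def, Measure.smul_apply, smul_eq_mul]
    exact ENNReal.mul_lt_top (ENNReal.inv_lt_top.mpr (pos_iff_ne_zero.mpr hab0)) (measure_lt_top _ _)⟩
  -- cancellation helper
  have hcancel : ∀ X : ℝ≥0∞, (a * b)⁻¹ * (X * (a * b)) = X := by
    intro X
    rw [mul_comm X (a * b), ← mul_assoc, ENNReal.inv_mul_cancel hab0 habt, one_mul]
  -- generic application of ν
  have hνapp : ∀ S : Set (ℝ × ℝ), MeasurableSet S →
      ν S = (1 - b) * μ (S ∩ A) + (1 - a) * μ (S ∩ B) + μ (S ∩ (A ∪ B)ᶜ) + ρ₁ S + ρ₂ S := by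
    intro S hS
    rw [hνdef, Measure.add_apply, Measure.add_apply, Measure.add_apply, Measure.add_apply,
      Measure.smul_apply, Measure.smul_apply, Measure.restrict_apply hS,
      Measure.restrict_apply hS, Measure.restrict_apply hS, smul_eq_mul, smul_eq_mul]
  -- decomposition of a set into A, B, and the rest
  have hdecS : ∀ S : Set (ℝ × ℝ), MeasurableSet S →
      μ (S ∩ A) + μ (S ∩ B) + μ (S ∩ (A ∪ B)ᶜ) = μ S := by
    intro S hS
    have h1 : μ (S ∩ (A ∪ B)) + μ (S \ (A ∪ B)) = μ S :=
      measure_inter_add_diff S (hAm.union hBm)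
    have h2 : S ∩ (A ∪ B) = (S ∩ A) ∪ (S ∩ B) := inter_union_distrib_left S A B
    have h3 : μ ((S ∩ A) ∪ (S ∩ B)) = μ (S ∩ A) + μ (S ∩ B) :=
      measure_union (hdisj.mono inter_subset_right inter_subset_right) (hS.inter hBm)
    rw [← h1, h2, h3, diff_eq]
  have key1 : ∀ p q mA mB mC : ℝ≥0∞, p*mA + q*mB + mC + b*mA + a*mB
      = (p+b)*mA + (q+a)*mB + mC := by intros; ring
  have key2 : ∀ p q mA mB mC : ℝ≥0∞, p*mA + q*mB + mC + a*mB + b*mA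
      = (p+b)*mA + (q+a)*mB + mC := by intros; ring
  -- first marginal
  have hmarg1 : ∀ B₀ : Set ℝ, MeasurableSet B₀ → B₀ ⊆ Icc 0 1 →
      ν (B₀ ×ˢ Icc (0:ℝ) 1) = volume B₀ := by
    intro B₀ hB₀m hB₀s
    have hSm : MeasurableSet (B₀ ×ˢ Icc (0:ℝ) 1) := hB₀m.prod measurableSet_Icc
    have hSA : (B₀ ×ˢ Icc (0:ℝ) 1) ∩ A = (Prod.fst ⁻¹' B₀) ∩ A := by
      ext z; constructor
      · rintro ⟨⟨h1, -⟩, hz⟩; exact ⟨h1, hz⟩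
      · rintro ⟨h1, hz⟩; exact ⟨⟨h1, (hAs hz).2⟩, hz⟩
    have hSB : (B₀ ×ˢ Icc (0:ℝ) 1) ∩ B = (Prod.fst ⁻¹' B₀) ∩ B := by
      ext z; constructor
      · rintro ⟨⟨h1, -⟩, hz⟩; exact ⟨h1, hz⟩
      · rintro ⟨h1, hz⟩; exact ⟨⟨h1, (hBs hz).2⟩, hz⟩
    have hρ₁S : ρ₁ (B₀ ×ˢ Icc (0:ℝ) 1) = b * μ ((Prod.fst ⁻¹' B₀) ∩ A) := by
      rw [hρ₁def, Measure.smul_apply, smul_eq_mul, hP₁def, Measure.prod_prod,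
        hπ₁app _ hB₀m, hτ₂I, hcancel]
    have hρ₂S : ρ₂ (B₀ ×ˢ Icc (0:ℝ) 1) = a * μ ((Prod.fst ⁻¹' B₀) ∩ B) := by
      rw [hρ₂def, Measure.smul_apply, smul_eq_mul, hP₂def, Measure.prod_prod,
        hπ₂app _ hB₀m, hτ₁I, mul_comm b a, hcancel]
    rw [hνapp _ hSm, hρ₁S, hρ₂S, hSA, hSB, key1, tsub_add_cancel_of_le hb1,
      tsub_add_cancel_of_le ha1, one_mul, one_mul, ← hSA, ← hSB, hdecS _ hSm,
      hds.2.1 B₀ hB₀m hB₀s]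
  -- second marginal
  have hmarg2 : ∀ B₀ : Set ℝ, MeasurableSet B₀ → B₀ ⊆ Icc 0 1 →
      ν (Icc (0:ℝ) 1 ×ˢ B₀) = volume B₀ := by
    intro B₀ hB₀m hB₀s
    have hSm : MeasurableSet (Icc (0:ℝ) 1 ×ˢ B₀) := measurableSet_Icc.prod hB₀m
    have hSA : (Icc (0:ℝ) 1 ×ˢ B₀) ∩ A = (Prod.snd ⁻¹' B₀) ∩ A := by
      ext z; constructor
      · rintro ⟨⟨-, h2⟩, hz⟩; exact ⟨h2, hz⟩
      · rintro ⟨h2, hz⟩; exact ⟨⟨(hAs hz).1, h2⟩, hz⟩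
    have hSB : (Icc (0:ℝ) 1 ×ˢ B₀) ∩ B = (Prod.snd ⁻¹' B₀) ∩ B := by
      ext z; constructor
      · rintro ⟨⟨-, h2⟩, hz⟩; exact ⟨h2, hz⟩
      · rintro ⟨h2, hz⟩; exact ⟨⟨(hBs hz).1, h2⟩, hz⟩
    have hρ₁S : ρ₁ (Icc (0:ℝ) 1 ×ˢ B₀) = a * μ ((Prod.snd ⁻¹' B₀) ∩ B) := by
      rw [hρ₁def, Measure.smul_apply, smul_eq_mul, hP₁def, Measure.prod_prod,
        hπ₁I, hτ₂app _ hB₀m, mul_comm (b*a) _, mul_comm b a, hcancel]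
    have hρ₂S : ρ₂ (Icc (0:ℝ) 1 ×ˢ B₀) = b * μ ((Prod.snd ⁻¹' B₀) ∩ A) := by
      rw [hρ₂def, Measure.smul_apply, smul_eq_mul, hP₂def, Measure.prod_prod,
        hπ₂I, hτ₁app _ hB₀m, mul_comm (a*b) _, hcancel]
    rw [hνapp _ hSm, hρ₁S, hρ₂S, hSA, hSB, key2, tsub_add_cancel_of_le hb1,
      tsub_add_cancel_of_le ha1, one_mul, one_mul, ← hSA, ← hSB, hdecS _ hSm,
      hds.2.2 B₀ hB₀m hB₀s]
  -- ν is a probability measure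
  have hνQ : ν Q = 1 := by
    have := hmarg1 (Icc 0 1) measurableSet_Icc subset_rfl
    rw [Real.volume_Icc] at this
    rw [hQdef]
    rw [this]
    norm_num
  have hemptyA : (Prod.fst ⁻¹' (Icc (0:ℝ) 1)ᶜ) ∩ A = ∅ :=
    eq_empty_iff_forall_notMem.mpr fun z ⟨h1, hz⟩ => h1 (hAs hz).1
  have hemptyB : (Prod.fst ⁻¹' (Icc (0:ℝ) 1)ᶜ) ∩ B = ∅ :=
    eq_empty_iff_forall_notMem.mpr fun z ⟨h1, hz⟩ => h1 (hBs hz).1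
  have hemptyA2 : (Prod.snd ⁻¹' (Icc (0:ℝ) 1)ᶜ) ∩ A = ∅ :=
    eq_empty_iff_forall_notMem.mpr fun z ⟨h1, hz⟩ => h1 (hAs hz).2
  have hemptyB2 : (Prod.snd ⁻¹' (Icc (0:ℝ) 1)ᶜ) ∩ B = ∅ :=
    eq_empty_iff_forall_notMem.mpr fun z ⟨h1, hz⟩ => h1 (hBs hz).2
  have houtside : ∀ m : Measure (ℝ × ℝ), m ((Icc (0:ℝ) 1)ᶜ ×ˢ univ) = 0 →
      m (univ ×ˢ (Icc (0:ℝ) 1)ᶜ) = 0 → m Qᶜ = 0 := by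
    intro m h1 h2
    have hsub : Qᶜ ⊆ ((Icc (0:ℝ) 1)ᶜ ×ˢ univ) ∪ (univ ×ˢ (Icc (0:ℝ) 1)ᶜ) := by
      intro z hz
      by_cases h : z.1 ∈ Icc (0:ℝ) 1
      · right; exact ⟨trivial, fun h2' => hz ⟨h, h2'⟩⟩
      · left; exact ⟨h, trivial⟩
    exact measure_mono_null hsub (measure_union_null h1 h2)
  have hρ₁Qc : ρ₁ Qᶜ = 0 := by
    refine houtside _ ?_ ?_
    · rw [hρ₁def, Measure.smul_apply, smul_eq_mul, hP₁def, Measure.prod_prod,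
        hπ₁app _ measurableSet_Icc.compl, hemptyA, measure_empty, mul_zero, zero_mul, mul_zero]
    · rw [hρ₁def, Measure.smul_apply, smul_eq_mul, hP₁def, Measure.prod_prod,
        hτ₂app _ measurableSet_Icc.compl, hemptyB2, measure_empty, mul_zero, mul_zero, mul_zero]
  have hρ₂Qc : ρ₂ Qᶜ = 0 := by
    refine houtside _ ?_ ?_
    · rw [hρ₂def, Measure.smul_apply, smul_eq_mul, hP₂def, Measure.prod_prod,
        hπ₂app _ measurableSet_Icc.compl, hemptyB, measure_empty, mul_zero, zero_mul, mul_zero]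
    · rw [hρ₂def, Measure.smul_apply, smul_eq_mul, hP₂def, Measure.prod_prod,
        hτ₁app _ measurableSet_Icc.compl, hemptyA2, measure_empty, mul_zero, mul_zero, mul_zero]
  have hQcA : Qᶜ ∩ A = ∅ := by
    rw [← disjoint_iff_inter_eq_empty]
    exact disjoint_compl_left.mono_right hAs
  have hQcB : Qᶜ ∩ B = ∅ := by
    rw [← disjoint_iff_inter_eq_empty]
    exact disjoint_compl_left.mono_right hBs
  have hνQc : ν Qᶜ = 0 := by
    rw [hνapp _ hQm.compl, hρ₁Qc, hρ₂Qc, hQcA, hQcB,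
      measure_mono_null inter_subset_left (ds_compl_sq hds), measure_empty, mul_zero, mul_zero]
    simp
  haveI hνprob : IsProbabilityMeasure ν := ⟨by
    rw [← measure_add_measure_compl hQm, hνQ, hνQc, add_zero]⟩
  -- Integrability of F with respect to all the pieces
  have hγ₁Qc : γ₁ Qᶜ = 0 := by rw [hγ₁app _ hQm.compl, hQcA, measure_empty, mul_zero]
  have hγ₂Qc : γ₂ Qᶜ = 0 := by rw [hγ₂app _ hQm.compl, hQcB, measure_empty, mul_zero]
  have hP₁Qc : P₁ Qᶜ = 0 := by
    have h := hρ₁Qc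
    rw [hρ₁def, Measure.smul_apply, smul_eq_mul] at h
    exact (mul_eq_zero.mp h).resolve_left (ENNReal.inv_ne_zero.mpr habt)
  have hP₂Qc : P₂ Qᶜ = 0 := by
    have h := hρ₂Qc
    rw [hρ₂def, Measure.smul_apply, smul_eq_mul] at h
    exact (mul_eq_zero.mp h).resolve_left (ENNReal.inv_ne_zero.mpr habt)
  have hresA : (μ.restrict A) Qᶜ = 0 := by
    rw [Measure.restrict_apply hQm.compl, hQcA, measure_empty]
  have hresB : (μ.restrict B) Qᶜ = 0 := by
    rw [Measure.restrict_apply hQm.compl, hQcB, measure_empty]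
  have hresC : (μ.restrict (A ∪ B)ᶜ) Qᶜ = 0 := by
    rw [Measure.restrict_apply hQm.compl]
    exact measure_mono_null inter_subset_left (ds_compl_sq hds)
  have hintA : Integrable F (μ.restrict A) := integrable_of_sq F hFc _ hresA
  have hintB : Integrable F (μ.restrict B) := integrable_of_sq F hFc _ hresB
  have hintC : Integrable F (μ.restrict (A ∪ B)ᶜ) := integrable_of_sq F hFc _ hresC
  have hintρ₁ : Integrable F ρ₁ := integrable_of_sq F hFc _ hρ₁Qc
  have hintρ₂ : Integrable F ρ₂ := integrable_of_sq F hFc _ hρ₂Qc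
  have hintP₁ : Integrable F P₁ := integrable_of_sq F hFc _ hP₁Qc
  have hintP₂ : Integrable F P₂ := integrable_of_sq F hFc _ hP₂Qc
  have hintγ₁ : Integrable F γ₁ := integrable_of_sq F hFc _ hγ₁Qc
  have hintγ₂ : Integrable F γ₂ := integrable_of_sq F hFc _ hγ₂Qc
  -- the product measure K and the pushforward identities
  set K : Measure ((ℝ × ℝ) × (ℝ × ℝ)) := γ₁.prod γ₂ with hKdef
  set g₁ : (ℝ × ℝ) × (ℝ × ℝ) → ℝ × ℝ := fun z => (z.1.1, z.2.2) with hg₁def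
  set g₂ : (ℝ × ℝ) × (ℝ × ℝ) → ℝ × ℝ := fun z => (z.2.1, z.1.2) with hg₂def
  have hg₁m : Measurable g₁ :=
    (measurable_fst.comp measurable_fst).prodMk (measurable_snd.comp measurable_snd)
  have hg₂m : Measurable g₂ :=
    (measurable_fst.comp measurable_snd).prodMk (measurable_snd.comp measurable_fst)
  have hK1 : K.map g₁ = P₁ := by
    rw [hP₁def, hπ₁def, hτ₂def, Measure.map_prod_map γ₁ γ₂ measurable_fst measurable_snd]
    rfl
  have hK2 : K.map g₂ = P₂ := by
    rw [hP₂def, hπ₂def, hτ₁def, Measure.map_prod_map γ₂ γ₁ measurable_fst measurable_snd,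
      ← Measure.prod_swap, Measure.map_map (measurable_fst.prodMap measurable_snd)
        measurable_swap]
    rfl
  have hK3 : K.map Prod.fst = (a * b) • γ₁ := by
    rw [hKdef, Measure.map_fst_prod, hγ₂univ]
  have hK4 : K.map Prod.snd = (b * a) • γ₂ := by
    rw [hKdef, Measure.map_snd_prod, hγ₁univ]
  haveI : IsFiniteMeasure ((a * b) • γ₁) := ⟨by
    rw [Measure.smul_apply, smul_eq_mul]
    exact ENNReal.mul_lt_top habt.lt_top (measure_lt_top _ _)⟩
  haveI : IsFiniteMeasure ((b * a) • γ₂) := ⟨by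
    rw [Measure.smul_apply, smul_eq_mul]
    exact ENNReal.mul_lt_top (ENNReal.mul_ne_top hbt hat).lt_top (measure_lt_top _ _)⟩
  have hintL₁ : Integrable F ((a * b) • γ₁) := by
    refine integrable_of_sq F hFc _ ?_
    rw [Measure.smul_apply, hγ₁Qc, smul_eq_mul, mul_zero]
  have hintL₂ : Integrable F ((b * a) • γ₂) := by
    refine integrable_of_sq F hFc _ ?_
    rw [Measure.smul_apply, hγ₂Qc, smul_eq_mul, mul_zero]
  -- integrability of the four composed maps
  have hmap1 : Integrable F (K.map g₁) := by rw [hK1]; exact hintP₁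
  have hmap2 : Integrable F (K.map g₂) := by rw [hK2]; exact hintP₂
  have hmap3 : Integrable F (K.map Prod.fst) := by rw [hK3]; exact hintL₁
  have hmap4 : Integrable F (K.map Prod.snd) := by rw [hK4]; exact hintL₂
  have hintK1 : Integrable (fun z => F (g₁ z)) K :=
    (integrable_map_measure hmap1.aestronglyMeasurable hg₁m.aemeasurable).mp hmap1
  have hintK2 : Integrable (fun z => F (g₂ z)) K :=
    (integrable_map_measure hmap2.aestronglyMeasurable hg₂m.aemeasurable).mp hmap2
  have hintK3 : Integrable (fun z : (ℝ × ℝ) × (ℝ × ℝ) => F z.1) K :=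
    (integrable_map_measure hmap3.aestronglyMeasurable measurable_fst.aemeasurable).mp hmap3
  have hintK4 : Integrable (fun z : (ℝ × ℝ) × (ℝ × ℝ) => F z.2) K :=
    (integrable_map_measure hmap4.aestronglyMeasurable measurable_snd.aemeasurable).mp hmap4
  -- integral identities for the four terms
  have hT1 : ∫ z, F (g₁ z) ∂K = ∫ p, F p ∂P₁ := by
    rw [← hK1, integral_map hg₁m.aemeasurable hmap1.aestronglyMeasurable]
  have hT2 : ∫ z, F (g₂ z) ∂K = ∫ p, F p ∂P₂ := by
    rw [← hK2, integral_map hg₂m.aemeasurable hmap2.aestronglyMeasurable]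
  have hT3 : ∫ z : (ℝ × ℝ) × (ℝ × ℝ), F z.1 ∂K = (a * b).toReal * ∫ p, F p ∂γ₁ := by
    rw [← integral_map measurable_fst.aemeasurable hmap3.aestronglyMeasurable, hK3,
      integral_smul_measure, smul_eq_mul]
  have hT4 : ∫ z : (ℝ × ℝ) × (ℝ × ℝ), F z.2 ∂K = (b * a).toReal * ∫ p, F p ∂γ₂ := by
    rw [← integral_map measurable_snd.aemeasurable hmap4.aestronglyMeasurable, hK4,
      integral_smul_measure, smul_eq_mul]
  -- D and its positivity
  set D : (ℝ × ℝ) × (ℝ × ℝ) → ℝ := fun z => F (g₁ z) + F (g₂ z) - F z.1 - F z.2 with hDdef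
  have hintD : Integrable D K := ((hintK1.add hintK2).sub hintK3).sub hintK4
  have hKAB : K ((A ×ˢ B)ᶜ) = 0 := by
    have hsub : (A ×ˢ B)ᶜ ⊆ (Aᶜ ×ˢ univ) ∪ (univ ×ˢ Bᶜ) := by
      intro z hz
      by_cases h : z.1 ∈ A
      · right; exact ⟨trivial, fun h2 => hz ⟨h, h2⟩⟩
      · left; exact ⟨h, trivial⟩
    refine measure_mono_null hsub (measure_union_null ?_ ?_)
    · rw [hKdef, Measure.prod_prod, hγ₁app _ hAm.compl, compl_inter_self, measure_empty,
        mul_zero, zero_mul]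
    · rw [hKdef, Measure.prod_prod, hγ₂app _ hBm.compl, compl_inter_self, measure_empty,
        mul_zero, mul_zero]
  have hKae : ∀ᵐ z ∂K, z ∈ A ×ˢ B := by
    rw [ae_iff]
    exact hKAB
  have hDn : 0 ≤ᵐ[K] D := by
    refine hKae.mono fun z hz => ?_
    have := hgain z.1 hz.1 z.2 hz.2
    simp only [hDdef, hg₁def, hg₂def, Pi.zero_apply]
    linarith
  have hsupp : A ×ˢ B ⊆ Function.support D := by
    intro z hz
    have := hgain z.1 hz.1 z.2 hz.2
    simp only [hDdef, hg₁def, hg₂def, Function.mem_support]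
    intro h
    linarith [h]
  have hKpos : 0 < K (Function.support D) := by
    refine lt_of_lt_of_le ?_ (measure_mono hsupp)
    rw [hKdef, Measure.prod_prod]
    have h1 : γ₁ A = b * a := by rw [hγ₁app _ hAm, inter_self]
    have h2 : γ₂ B = a * b := by rw [hγ₂app _ hBm, inter_self]
    rw [h1, h2]
    exact pos_iff_ne_zero.mpr (mul_ne_zero (mul_ne_zero hB hA) hab0)
  have hDpos : 0 < ∫ z, D z ∂K := (integral_pos_iff_support_of_nonneg_ae hDn hintD).mpr hKpos
  -- assemble the integral identity
  set IA : ℝ := ∫ p, F p ∂(μ.restrict A) with hIAdef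
  set IB : ℝ := ∫ p, F p ∂(μ.restrict B) with hIBdef
  set IC : ℝ := ∫ p, F p ∂(μ.restrict (A ∪ B)ᶜ) with hICdef
  set R1 : ℝ := ∫ p, F p ∂ρ₁ with hR1def
  set R2 : ℝ := ∫ p, F p ∂ρ₂ with hR2def
  have ha'pos : 0 < a.toReal := ENNReal.toReal_pos hA hat
  have hb'pos : 0 < b.toReal := ENNReal.toReal_pos hB hbt
  have hγ₁int : ∫ p, F p ∂γ₁ = b.toReal * IA := by
    rw [hγ₁def, integral_smul_measure, smul_eq_mul, hIAdef]
  have hγ₂int : ∫ p, F p ∂γ₂ = a.toReal * IB := by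
    rw [hγ₂def, integral_smul_measure, smul_eq_mul, hIBdef]
  have hP₁int : ∫ p, F p ∂P₁ = (a.toReal * b.toReal) * R1 := by
    have : R1 = ((a * b)⁻¹).toReal * ∫ p, F p ∂P₁ := by
      rw [hR1def, hρ₁def, integral_smul_measure, smul_eq_mul]
    rw [ENNReal.toReal_inv, ENNReal.toReal_mul] at this
    have hne : a.toReal * b.toReal ≠ 0 := ne_of_gt (mul_pos ha'pos hb'pos)
    field_simp at this
    linarith [this]
  have hP₂int : ∫ p, F p ∂P₂ = (a.toReal * b.toReal) * R2 := by
    have : R2 = ((a * b)⁻¹).toReal * ∫ p, F p ∂P₂ := by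
      rw [hR2def, hρ₂def, integral_smul_measure, smul_eq_mul]
    rw [ENNReal.toReal_inv, ENNReal.toReal_mul] at this
    have hne : a.toReal * b.toReal ≠ 0 := ne_of_gt (mul_pos ha'pos hb'pos)
    field_simp at this
    linarith [this]
  have hDint : ∫ z, D z ∂K =
      (a.toReal * b.toReal) * R1 + (a.toReal * b.toReal) * R2
      - (a.toReal * b.toReal) * (b.toReal * IA) - (a.toReal * b.toReal) * (a.toReal * IB) := by
    have i1 : Integrable (fun z => F (g₁ z) + F (g₂ z)) K := hintK1.add hintK2
    have i2 : Integrable (fun z => F (g₁ z) + F (g₂ z) - F z.1) K := i1.sub hintK3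
    have e1 : ∫ z, (F (g₁ z) + F (g₂ z) - F z.1) - F z.2 ∂K
        = (∫ z, F (g₁ z) + F (g₂ z) - F z.1 ∂K) - ∫ z : (ℝ × ℝ) × (ℝ × ℝ), F z.2 ∂K :=
      integral_sub i2 hintK4
    have e2 : ∫ z, (F (g₁ z) + F (g₂ z)) - F z.1 ∂K
        = (∫ z, F (g₁ z) + F (g₂ z) ∂K) - ∫ z : (ℝ × ℝ) × (ℝ × ℝ), F z.1 ∂K :=
      integral_sub i1 hintK3
    have e3 : ∫ z, F (g₁ z) + F (g₂ z) ∂K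
        = (∫ z, F (g₁ z) ∂K) + ∫ z, F (g₂ z) ∂K := integral_add hintK1 hintK2
    simp only [hDdef]
    rw [e1, e2, e3, hT1, hT2, hT3, hT4, hP₁int, hP₂int, hγ₁int, hγ₂int,
      ENNReal.toReal_mul, ENNReal.toReal_mul]
    ring
  -- integral with respect to ν and μ
  haveI : IsFiniteMeasure ((1 - b) • μ.restrict A) := ⟨by
    rw [Measure.smul_apply, smul_eq_mul]
    exact ENNReal.mul_lt_top (lt_of_le_of_lt tsub_le_self ENNReal.one_lt_top) (measure_lt_top _ _)⟩
  haveI : IsFiniteMeasure ((1 - a) • μ.restrict B) := ⟨by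
    rw [Measure.smul_apply, smul_eq_mul]
    exact ENNReal.mul_lt_top (lt_of_le_of_lt tsub_le_self ENNReal.one_lt_top) (measure_lt_top _ _)⟩
  have hint1 : Integrable F ((1 - b) • μ.restrict A) := by
    refine integrable_of_sq F hFc _ ?_
    rw [Measure.smul_apply, hresA, smul_eq_mul, mul_zero]
  have hint2 : Integrable F ((1 - a) • μ.restrict B) := by
    refine integrable_of_sq F hFc _ ?_
    rw [Measure.smul_apply, hresB, smul_eq_mul, mul_zero]
  have hIν : ∫ p, F p ∂ν = (1 - b.toReal) * IA + (1 - a.toReal) * IB + IC + R1 + R2 := by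
    rw [hνdef, integral_add_measure (((hint1.add_measure hint2).add_measure hintC).add_measure
        hintρ₁) hintρ₂,
      integral_add_measure ((hint1.add_measure hint2).add_measure hintC) hintρ₁,
      integral_add_measure (hint1.add_measure hint2) hintC,
      integral_add_measure hint1 hint2, integral_smul_measure, integral_smul_measure,
      ENNReal.toReal_sub_of_le hb1 ENNReal.one_ne_top, ENNReal.toReal_sub_of_le ha1 ENNReal.one_ne_top,
      ENNReal.toReal_one, smul_eq_mul, smul_eq_mul, hIAdef, hIBdef, hICdef, hR1def, hR2def]
  have hμdec : μ.restrict A + μ.restrict B + μ.restrict (A ∪ B)ᶜ = μ := by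
    rw [← Measure.restrict_union hdisj hBm, Measure.restrict_add_restrict_compl (hAm.union hBm)]
  have hIμ : ∫ p, F p ∂μ = IA + IB + IC := by
    rw [← hμdec, integral_add_measure (hintA.add_measure hintB) hintC,
      integral_add_measure hintA hintB, hIAdef, hIBdef, hICdef]
  have hfinal : (a.toReal * b.toReal) * ((∫ p, F p ∂ν) - ∫ p, F p ∂μ) = ∫ z, D z ∂K := by
    rw [hIν, hIμ, hDint]
    ring
  have hlt : ∫ p, F p ∂μ < ∫ p, F p ∂ν := by
    nlinarith [hDpos, hfinal, mul_pos ha'pos hb'pos]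
  exact ⟨ν, ⟨hνprob, hmarg1, hmarg2⟩, hlt⟩

end Swap

section Cover

variable {μ : Measure (ℝ × ℝ)}

lemma rect_null (hds : IsDoublyStochastic μ) {p q y : ℝ}
    (h : μ (Ioo p q ×ˢ Ioo y 1) = 0) :
    μ (Icc 0 q ×ˢ Icc (0:ℝ) 1) ≤ μ (Icc 0 p ×ˢ Icc (0:ℝ) 1) + μ (Ioc p q ×ˢ Icc 0 y) := by
  have hN : μ ((Ioo p q ×ˢ Ioo y 1) ∪ ({q} ×ˢ (univ : Set ℝ)) ∪ ((univ : Set ℝ) ×ˢ {(1:ℝ)})) = 0 :=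
    measure_union_null (measure_union_null h (ds_vline hds q)) (ds_hline hds 1)
  have hsub : Icc 0 q ×ˢ Icc (0:ℝ) 1 ⊆
      ((Icc 0 p ×ˢ Icc (0:ℝ) 1) ∪ (Ioc p q ×ˢ Icc 0 y)) ∪
      ((Ioo p q ×ˢ Ioo y 1) ∪ ({q} ×ˢ (univ : Set ℝ)) ∪ ((univ : Set ℝ) ×ˢ {(1:ℝ)})) := by
    rintro ⟨s, t⟩ ⟨hs, ht⟩
    by_cases h1 : s ≤ p
    · exact Or.inl (Or.inl ⟨⟨hs.1, h1⟩, ht⟩)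
    push_neg at h1
    by_cases h2 : t ≤ y
    · exact Or.inl (Or.inr ⟨⟨h1, hs.2⟩, ⟨ht.1, h2⟩⟩)
    push_neg at h2
    by_cases h3 : s = q
    · exact Or.inr (Or.inl (Or.inr ⟨h3, trivial⟩))
    have hsq : s < q := lt_of_le_of_ne hs.2 h3
    by_cases h4 : t = 1
    · exact Or.inr (Or.inr ⟨trivial, h4⟩)
    have ht1 : t < 1 := lt_of_le_of_ne ht.2 h4
    exact Or.inr (Or.inl (Or.inl ⟨⟨h1, hsq⟩, ⟨h2, ht1⟩⟩))
  calc μ (Icc 0 q ×ˢ Icc (0:ℝ) 1) ≤ _ := measure_mono hsub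
    _ ≤ μ ((Icc 0 p ×ˢ Icc (0:ℝ) 1) ∪ (Ioc p q ×ˢ Icc 0 y)) +
        μ ((Ioo p q ×ˢ Ioo y 1) ∪ ({q} ×ˢ (univ : Set ℝ)) ∪ ((univ : Set ℝ) ×ˢ {(1:ℝ)})) :=
      measure_union_le _ _
    _ = μ ((Icc 0 p ×ˢ Icc (0:ℝ) 1) ∪ (Ioc p q ×ˢ Icc 0 y)) := by rw [hN, add_zero]
    _ ≤ μ (Icc 0 p ×ˢ Icc (0:ℝ) 1) + μ (Ioc p q ×ˢ Icc 0 y) := measure_union_le _ _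

lemma rect_null_low (hds : IsDoublyStochastic μ) {p q y : ℝ}
    (h : μ (Ioo p q ×ˢ Ioo 0 y) = 0) :
    μ (Icc 0 q ×ˢ Icc 0 y) ≤ μ (Icc 0 p ×ˢ Icc 0 y) := by
  have hN : μ ((Ioo p q ×ˢ Ioo 0 y) ∪ ({q} ×ˢ (univ : Set ℝ)) ∪
      ((univ : Set ℝ) ×ˢ {(0:ℝ)}) ∪ ((univ : Set ℝ) ×ˢ {y})) = 0 :=
    measure_union_null (measure_union_null (measure_union_null h (ds_vline hds q))
      (ds_hline hds 0)) (ds_hline hds y)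
  have hsub : Icc 0 q ×ˢ Icc 0 y ⊆
      (Icc 0 p ×ˢ Icc 0 y) ∪
      ((Ioo p q ×ˢ Ioo 0 y) ∪ ({q} ×ˢ (univ : Set ℝ)) ∪
        ((univ : Set ℝ) ×ˢ {(0:ℝ)}) ∪ ((univ : Set ℝ) ×ˢ {y})) := by
    rintro ⟨s, t⟩ ⟨hs, ht⟩
    by_cases h1 : s ≤ p
    · exact Or.inl ⟨⟨hs.1, h1⟩, ht⟩
    push_neg at h1
    by_cases h3 : s = q
    · exact Or.inr (Or.inl (Or.inl (Or.inr ⟨h3, trivial⟩)))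
    have hsq : s < q := lt_of_le_of_ne hs.2 h3
    by_cases h4 : t = 0
    · exact Or.inr (Or.inl (Or.inr ⟨trivial, h4⟩))
    have ht0 : 0 < t := lt_of_le_of_ne ht.1 (Ne.symm h4)
    by_cases h5 : t = y
    · exact Or.inr (Or.inr ⟨trivial, h5⟩)
    have hty : t < y := lt_of_le_of_ne ht.2 h5
    exact Or.inr (Or.inl (Or.inl (Or.inl ⟨⟨h1, hsq⟩, ⟨ht0, hty⟩⟩)))
  calc μ (Icc 0 q ×ˢ Icc 0 y) ≤ _ := measure_mono hsub
    _ ≤ μ (Icc 0 p ×ˢ Icc 0 y) + μ ((Ioo p q ×ˢ Ioo 0 y) ∪ ({q} ×ˢ (univ : Set ℝ)) ∪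
        ((univ : Set ℝ) ×ˢ {(0:ℝ)}) ∪ ((univ : Set ℝ) ×ˢ {y})) := measure_union_le _ _
    _ = μ (Icc 0 p ×ˢ Icc 0 y) := by rw [hN, add_zero]

end Cover

theorem stmt2 (x₁ x₂ : ℝ) (hx₁ : 0 < x₁) (hx₁₂ : x₁ < x₂) (hx₂ : x₂ < 1)
    (F : ℝ × ℝ → ℝ)
    (hFcont : ContinuousOn F (Icc (0:ℝ) 1 ×ˢ Icc (0:ℝ) 1))
    (hpos1 : ∀ x y, x ∈ Ioo 0 x₁ → y ∈ Ioo (0:ℝ) 1 →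
      DifferentiableAt ℝ (fun x' => F (x', y)) x ∧
      DifferentiableAt ℝ (fun y' => deriv (fun x' => F (x', y')) x) y ∧
      0 < deriv (fun y' => deriv (fun x' => F (x', y')) x) y)
    (hneg : ∀ x y, x ∈ Ioo x₁ x₂ → y ∈ Ioo (0:ℝ) 1 →
      DifferentiableAt ℝ (fun x' => F (x', y)) x ∧
      DifferentiableAt ℝ (fun y' => deriv (fun x' => F (x', y')) x) y ∧
      deriv (fun y' => deriv (fun x' => F (x', y')) x) y < 0)
    (hpos2 : ∀ x y, x ∈ Ioo x₂ 1 → y ∈ Ioo (0:ℝ) 1 →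
      DifferentiableAt ℝ (fun x' => F (x', y)) x ∧
      DifferentiableAt ℝ (fun y' => deriv (fun x' => F (x', y')) x) y ∧
      0 < deriv (fun y' => deriv (fun x' => F (x', y')) x) y)
    (μstar : Measure (ℝ × ℝ)) (hds : IsDoublyStochastic μstar)
    (hmax : ∀ μ : Measure (ℝ × ℝ), IsDoublyStochastic μ →
      ∫ p, F p ∂μ ≤ ∫ p, F p ∂μstar)
    (C : ℝ → ℝ → ℝ) (hC : ∀ x y, C x y = copulaOf μstar x y)
    (h₁ h₂ : ℝ → ℝ) (hh₁ : ∀ y, h₁ y = C x₁ y) (hh₂ : ∀ y, h₂ y = C x₂ y) :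
    ∀ x ∈ Icc (0:ℝ) 1, ∀ y ∈ Icc (0:ℝ) 1,
      (x ∈ Icc 0 x₁ → C x y = min x (h₁ y)) ∧
      (x ∈ Icc x₁ x₂ → C x y = max (x + h₂ y - x₂) (h₁ y)) ∧
      (x ∈ Icc x₂ 1 → C x y = min (x - x₂ + h₂ y) y) := by
  intro x hx y hy
  have hx₁1 : x₁ < 1 := lt_trans hx₁₂ hx₂
  have hx₂0 : 0 < x₂ := lt_trans hx₁ hx₁₂
  refine ⟨?_, ?_, ?_⟩
  -- ============ STRIP 1 ============
  · intro hxs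
    simp only [hh₁, hC]
    have hub : copulaOf μstar x y ≤ min x (copulaOf μstar x₁ y) :=
      le_min (cop_le_x hds ⟨hx.1, hx.2⟩ hy.2) (cop_mono_x hds hxs.2 y)
    refine le_antisymm hub (le_of_not_gt fun hlt => ?_)
    have h1 : copulaOf μstar x y < x := lt_of_lt_of_le hlt (min_le_left _ _)
    have h2 : copulaOf μstar x y < copulaOf μstar x₁ y := lt_of_lt_of_le hlt (min_le_right _ _)
    have hx0 : 0 < x := lt_of_le_of_lt (cop_nonneg μstar x y) h1
    have hxx₁ : x < x₁ := by
      rcases lt_or_eq_of_le hxs.2 with h | h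
      · exact h
      · rw [h] at h2; exact absurd h2 (lt_irrefl _)
    have hy0 : 0 < y := by
      rcases (lt_or_eq_of_le hy.1) with h | h
      · exact h
      · rw [← h] at h2
        simp only [cop_zero_y hds] at h2
        exact absurd h2 (lt_irrefl _)
    have hy1 : y < 1 := by
      rcases lt_or_eq_of_le hy.2 with h | h
      · exact h
      · rw [h, cop_x_one hds ⟨hx.1, hx.2⟩] at h1
        exact absurd h1 (lt_irrefl _)
    have hAm : MeasurableSet (Ioo 0 x ×ˢ Ioo y 1) := measurableSet_Ioo.prod measurableSet_Ioo
    have hBm : MeasurableSet (Ioo x x₁ ×ˢ Ioo 0 y) := measurableSet_Ioo.prod measurableSet_Ioo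
    have hAs : Ioo 0 x ×ˢ Ioo y 1 ⊆ Icc (0:ℝ) 1 ×ˢ Icc (0:ℝ) 1 := fun z hz =>
      ⟨⟨hz.1.1.le, hz.1.2.le.trans hx.2⟩, ⟨hy.1.trans hz.2.1.le, hz.2.2.le⟩⟩
    have hBs : Ioo x x₁ ×ˢ Ioo 0 y ⊆ Icc (0:ℝ) 1 ×ˢ Icc (0:ℝ) 1 := fun z hz =>
      ⟨⟨hx.1.trans hz.1.1.le, hz.1.2.le.trans hx₁1.le⟩, ⟨hz.2.1.le, hz.2.2.le.trans hy.2⟩⟩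
    have hdisj : Disjoint (Ioo 0 x ×ˢ Ioo y 1) (Ioo x x₁ ×ˢ Ioo 0 y) := by
      rw [Set.disjoint_left]
      rintro ⟨s, t⟩ ⟨hs, -⟩ ⟨hs', -⟩
      exact absurd (lt_trans hs.2 hs'.1) (lt_irrefl s)
    have hAne : μstar (Ioo 0 x ×ˢ Ioo y 1) ≠ 0 := by
      intro h0
      have hcov := rect_null hds h0
      have hz : μstar (Icc 0 0 ×ˢ Icc (0:ℝ) 1) = 0 := by
        refine measure_mono_null ?_ (ds_vline hds 0)
        rintro ⟨s, t⟩ ⟨hs, -⟩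
        exact ⟨by simpa using hs, trivial⟩
      have hsub2 : μstar (Ioc 0 x ×ˢ Icc 0 y) ≤ μstar (Icc 0 x ×ˢ Icc 0 y) :=
        measure_mono (prod_mono Ioc_subset_Icc_self subset_rfl)
      rw [ds_rect_x hds ⟨hx.1, hx.2⟩, hz, zero_add] at hcov
      have hfin := le_trans hcov hsub2
      have h' := ENNReal.toReal_mono (cop_ne_top hds _) hfin
      rw [ENNReal.toReal_ofReal hx.1] at h'
      exact absurd h' (not_le.mpr h1)
    have hBne : μstar (Ioo x x₁ ×ˢ Ioo 0 y) ≠ 0 := by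
      intro h0
      have hcov := rect_null_low hds h0
      have h' := ENNReal.toReal_mono (cop_ne_top hds _) hcov
      exact absurd h' (not_le.mpr h2)
    have hgain : ∀ p ∈ Ioo 0 x ×ˢ Ioo y 1, ∀ q ∈ Ioo x x₁ ×ˢ Ioo 0 y,
        F p + F q < F (p.1, q.2) + F (q.1, p.2) := by
      rintro ⟨s, t⟩ ⟨hs, ht⟩ ⟨u, v⟩ ⟨hu, hv⟩
      exact strict_supermod F hpos1 ⟨hs.1, lt_trans hs.2 hxx₁⟩ ⟨lt_trans hx0 hu.1, hu.2⟩
        (lt_trans hs.2 hu.1) ⟨hv.1, lt_trans hv.2 hy1⟩ ⟨lt_trans hy0 ht.1, ht.2⟩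
        (lt_trans hv.2 ht.1)
    obtain ⟨ν, hν, hlt'⟩ := swap_improve F hFcont hds hAm hBm hAs hBs hdisj hgain hAne hBne
    exact absurd (hmax ν hν) (not_le.mpr hlt')
  -- ============ STRIP 2 ============
  · intro hxs
    simp only [hh₁, hh₂, hC]
    have hx0 : 0 ≤ x := le_trans hx₁.le hxs.1
    have hlb : max (x + copulaOf μstar x₂ y - x₂) (copulaOf μstar x₁ y) ≤ copulaOf μstar x y := by
      refine max_le ?_ (cop_mono_x hds hxs.1 y)
      have := cop_lip hds hx0 hxs.2 hx₂.le hy.2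
      linarith
    refine le_antisymm (le_of_not_gt fun hlt => ?_) hlb
    have h2 : copulaOf μstar x₁ y < copulaOf μstar x y := lt_of_le_of_lt (le_max_right _ _) hlt
    have h3 : x + copulaOf μstar x₂ y - x₂ < copulaOf μstar x y :=
      lt_of_le_of_lt (le_max_left _ _) hlt
    have hx₁x : x₁ < x := by
      rcases lt_or_eq_of_le hxs.1 with h | h
      · exact h
      · rw [← h] at h2; exact absurd h2 (lt_irrefl _)
    have hxx₂ : x < x₂ := by
      rcases lt_or_eq_of_le hxs.2 with h | h
      · exact h
      · rw [h] at h3; exact absurd h3 (by simp)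
    have hy0 : 0 < y := by
      rcases (lt_or_eq_of_le hy.1) with h | h
      · exact h
      · rw [← h] at h2
        simp only [cop_zero_y hds] at h2
        exact absurd h2 (lt_irrefl _)
    have hy1 : y < 1 := by
      rcases lt_or_eq_of_le hy.2 with h | h
      · exact h
      · rw [h, cop_x_one hds ⟨hx.1, hx.2⟩, cop_x_one hds ⟨hx₂0.le, hx₂.le⟩] at h3
        exact absurd h3 (by simp)
    have hAm : MeasurableSet (Ioo x x₂ ×ˢ Ioo y 1) := measurableSet_Ioo.prod measurableSet_Ioo
    have hBm : MeasurableSet (Ioo x₁ x ×ˢ Ioo 0 y) := measurableSet_Ioo.prod measurableSet_Ioo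
    have hAs : Ioo x x₂ ×ˢ Ioo y 1 ⊆ Icc (0:ℝ) 1 ×ˢ Icc (0:ℝ) 1 := fun z hz =>
      ⟨⟨hx0.trans hz.1.1.le, hz.1.2.le.trans hx₂.le⟩, ⟨hy.1.trans hz.2.1.le, hz.2.2.le⟩⟩
    have hBs : Ioo x₁ x ×ˢ Ioo 0 y ⊆ Icc (0:ℝ) 1 ×ˢ Icc (0:ℝ) 1 := fun z hz =>
      ⟨⟨hx₁.le.trans hz.1.1.le, hz.1.2.le.trans hx.2⟩, ⟨hz.2.1.le, hz.2.2.le.trans hy.2⟩⟩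
    have hdisj : Disjoint (Ioo x x₂ ×ˢ Ioo y 1) (Ioo x₁ x ×ˢ Ioo 0 y) := by
      rw [Set.disjoint_left]
      rintro ⟨s, t⟩ ⟨hs, -⟩ ⟨hs', -⟩
      exact absurd (lt_trans hs'.2 hs.1) (lt_irrefl s)
    have hAne : μstar (Ioo x x₂ ×ˢ Ioo y 1) ≠ 0 := by
      intro h0
      have hcov := rect_null hds h0
      have hsplit := cop_split (μ := μstar) hds hx0 hxs.2 y
      set d := μstar (Ioc x x₂ ×ˢ Icc 0 y) with hddef
      have hdt : d ≠ ⊤ := cop_ne_top hds _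
      rw [ds_rect_x hds ⟨hx₂0.le, hx₂.le⟩, ds_rect_x hds ⟨hx.1, hx.2⟩] at hcov
      have h' := ENNReal.toReal_mono (by
        exact ENNReal.add_ne_top.mpr ⟨ENNReal.ofReal_ne_top, hdt⟩) hcov
      rw [ENNReal.toReal_add ENNReal.ofReal_ne_top hdt, ENNReal.toReal_ofReal hx₂0.le,
        ENNReal.toReal_ofReal hx.1] at h'
      have hsplit' : copulaOf μstar x₂ y = copulaOf μstar x y + d.toReal := by
        rw [copulaOf, copulaOf, hsplit, ENNReal.toReal_add (cop_ne_top hds _) hdt]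
      linarith
    have hBne : μstar (Ioo x₁ x ×ˢ Ioo 0 y) ≠ 0 := by
      intro h0
      have hcov := rect_null_low hds h0
      have h' := ENNReal.toReal_mono (cop_ne_top hds _) hcov
      exact absurd h' (not_le.mpr h2)
    have hgain : ∀ p ∈ Ioo x x₂ ×ˢ Ioo y 1, ∀ q ∈ Ioo x₁ x ×ˢ Ioo 0 y,
        F p + F q < F (p.1, q.2) + F (q.1, p.2) := by
      rintro ⟨s, t⟩ ⟨hs, ht⟩ ⟨u, v⟩ ⟨hu, hv⟩
      have := strict_submod F hneg ⟨hu.1, lt_trans hu.2 hxx₂⟩ ⟨lt_trans hx₁x hs.1, hs.2⟩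
        (lt_trans hu.2 hs.1) ⟨hv.1, lt_trans hv.2 hy1⟩ ⟨lt_trans hy0 ht.1, ht.2⟩
        (lt_trans hv.2 ht.1)
      dsimp only
      linarith
    obtain ⟨ν, hν, hlt'⟩ := swap_improve F hFcont hds hAm hBm hAs hBs hdisj hgain hAne hBne
    exact absurd (hmax ν hν) (not_le.mpr hlt')
  -- ============ STRIP 3 ============
  · intro hxs
    simp only [hh₂, hC]
    have hub : copulaOf μstar x y ≤ min (x - x₂ + copulaOf μstar x₂ y) y := by
      refine le_min ?_ (cop_le_y hds ⟨hy.1, hy.2⟩ hx.2)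
      have := cop_lip hds hx₂0.le hxs.1 hx.2 hy.2
      linarith
    refine le_antisymm hub (le_of_not_gt fun hlt => ?_)
    have h1 : copulaOf μstar x y < x - x₂ + copulaOf μstar x₂ y :=
      lt_of_lt_of_le hlt (min_le_left _ _)
    have h2 : copulaOf μstar x y < y := lt_of_lt_of_le hlt (min_le_right _ _)
    have hx₂x : x₂ < x := by
      rcases lt_or_eq_of_le hxs.1 with h | h
      · exact h
      · rw [← h] at h1; exact absurd h1 (by simp)
    have hx1 : x < 1 := by
      rcases lt_or_eq_of_le hxs.2 with h | h
      · exact h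
      · rw [h, cop_one_y hds ⟨hy.1, hy.2⟩] at h2
        exact absurd h2 (lt_irrefl _)
    have hy0 : 0 < y := lt_of_le_of_lt (cop_nonneg μstar x y) h2
    have hy1 : y < 1 := by
      rcases lt_or_eq_of_le hy.2 with h | h
      · exact h
      · rw [h, cop_x_one hds ⟨hx.1, hx.2⟩, cop_x_one hds ⟨hx₂0.le, hx₂.le⟩] at h1
        exact absurd h1 (by simp)
    have hAm : MeasurableSet (Ioo x₂ x ×ˢ Ioo y 1) := measurableSet_Ioo.prod measurableSet_Ioo
    have hBm : MeasurableSet (Ioo x 1 ×ˢ Ioo 0 y) := measurableSet_Ioo.prod measurableSet_Ioo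
    have hAs : Ioo x₂ x ×ˢ Ioo y 1 ⊆ Icc (0:ℝ) 1 ×ˢ Icc (0:ℝ) 1 := fun z hz =>
      ⟨⟨hx₂0.le.trans hz.1.1.le, hz.1.2.le.trans hx.2⟩, ⟨hy.1.trans hz.2.1.le, hz.2.2.le⟩⟩
    have hBs : Ioo x 1 ×ˢ Ioo 0 y ⊆ Icc (0:ℝ) 1 ×ˢ Icc (0:ℝ) 1 := fun z hz =>
      ⟨⟨hx.1.trans hz.1.1.le, hz.1.2.le⟩, ⟨hz.2.1.le, hz.2.2.le.trans hy.2⟩⟩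
    have hdisj : Disjoint (Ioo x₂ x ×ˢ Ioo y 1) (Ioo x 1 ×ˢ Ioo 0 y) := by
      rw [Set.disjoint_left]
      rintro ⟨s, t⟩ ⟨hs, -⟩ ⟨hs', -⟩
      exact absurd (lt_trans hs.2 hs'.1) (lt_irrefl s)
    have hAne : μstar (Ioo x₂ x ×ˢ Ioo y 1) ≠ 0 := by
      intro h0
      have hcov := rect_null hds h0
      have hsplit := cop_split (μ := μstar) hds hx₂0.le hxs.1 y
      set d := μstar (Ioc x₂ x ×ˢ Icc 0 y) with hddef
      have hdt : d ≠ ⊤ := cop_ne_top hds _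
      rw [ds_rect_x hds ⟨hx.1, hx.2⟩, ds_rect_x hds ⟨hx₂0.le, hx₂.le⟩] at hcov
      have h' := ENNReal.toReal_mono (by
        exact ENNReal.add_ne_top.mpr ⟨ENNReal.ofReal_ne_top, hdt⟩) hcov
      rw [ENNReal.toReal_add ENNReal.ofReal_ne_top hdt, ENNReal.toReal_ofReal hx.1,
        ENNReal.toReal_ofReal hx₂0.le] at h'
      have hsplit' : copulaOf μstar x y = copulaOf μstar x₂ y + d.toReal := by
        rw [copulaOf, copulaOf, hsplit, ENNReal.toReal_add (cop_ne_top hds _) hdt]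
      linarith
    have hBne : μstar (Ioo x 1 ×ˢ Ioo 0 y) ≠ 0 := by
      intro h0
      have hcov := rect_null_low hds h0
      rw [ds_rect_y hds ⟨hy.1, hy.2⟩] at hcov
      have h' := ENNReal.toReal_mono (cop_ne_top hds _) hcov
      rw [ENNReal.toReal_ofReal hy.1] at h'
      exact absurd h' (not_le.mpr h2)
    have hgain : ∀ p ∈ Ioo x₂ x ×ˢ Ioo y 1, ∀ q ∈ Ioo x 1 ×ˢ Ioo 0 y,
        F p + F q < F (p.1, q.2) + F (q.1, p.2) := by
      rintro ⟨s, t⟩ ⟨hs, ht⟩ ⟨u, v⟩ ⟨hu, hv⟩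
      exact strict_supermod F hpos2 ⟨hs.1, lt_trans hs.2 hx1⟩ ⟨lt_trans hx₂x hu.1, hu.2⟩
        (lt_trans hs.2 hu.1) ⟨hv.1, lt_trans hv.2 hy1⟩ ⟨lt_trans hy0 ht.1, ht.2⟩
        (lt_trans hv.2 ht.1)
    obtain ⟨ν, hν, hlt'⟩ := swap_improve F hFcont hds hAm hBm hAs hBs hdisj hgain hAne hBne
    exact absurd (hmax ν hν) (not_le.mpr hlt')
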